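/- Let M be even, S₁ the M-th roots of unity, and θ = π/M. Then for each m with 0 ≤ m ≤ M/2 − 1, the two radii 2cos(πm/M + θ/2) and 2cos(π(m+1)/M − θ/2) coincide, so the sum constellation S₁ + e^{iθ}S₁ lies on exactly M/2 concentric circles (together with possibly the origin excluded since all radii are positive). -/

import Mathlib

open Real

lemma abs_exp_add_exp (a b : ℝ) :
    ‖(Complex.exp (Complex.I * a) + Complex.exp (Complex.I * b))‖
      = 2 * |Real.cos ((a - b)/2)| := by
  have h : Complex.exp (Complex.I * a) + Complex.exp (Complex.I * b)
      = Complex.exp (Complex.I * (((a+b)/2 : ℝ))) * (2 * Complex.cos (((a-b)/2 : ℝ))) := by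
    rw [Complex.cos, mul_div_cancel₀ _ (two_ne_zero), mul_add, ← Complex.exp_add, ← Complex.exp_add]
    congr 2 <;> push_cast <;> ring
  rw [h, norm_mul, mul_comm Complex.I, Complex.norm_exp_ofReal_mul_I, one_mul,
    ← Complex.ofReal_cos, norm_mul, Complex.norm_real, Real.norm_eq_abs, Complex.norm_two]

lemma cos_pos_aux (M : ℕ) (K : ℕ) (hK : M = 2 * K) (hK1 : 1 ≤ K) (x : ℝ)
    (hx0 : 0 ≤ x) (hx : x ≤ (K - 1 : ℝ)) :
    0 < Real.cos (π * x / M + (π / M) / 2) := by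
  have hMpos : (0 : ℝ) < M := by
    have : (0:ℕ) < M := by omega
    exact_mod_cast this
  apply Real.cos_pos_of_mem_Ioo
  constructor
  · have : 0 ≤ π * x / M + (π / M) / 2 := by positivity
    linarith [pi_pos]
  · have heq : π * x / M + (π / M) / 2 = π * (2*x+1) / (2*M) := by
      field_simp
    rw [heq, div_lt_div_iff₀ (by positivity) two_pos]
    have hxM : 2*x + 1 < (M : ℝ) := by
      have : (1:ℝ) ≤ (K:ℝ) := by exact_mod_cast hK1
      have hM' : (M:ℝ) = 2*K := by exact_mod_cast hK
      linarith
    nlinarith [pi_pos]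

/-- For `M` even and `θ = π/M`, the outer and inner radii coincide:
`2cos(πm/M + θ/2) = 2cos(π(m+1)/M − θ/2)` for each `0 ≤ m ≤ M/2 − 1`, and all
these radii are positive; consequently the sum constellation `S₁ + e^{iθ}S₁`
of the `M`-th roots of unity lies on exactly `M/2` concentric circles. -/
theorem stmt_8 (M : ℕ) (hM : 0 < M) (hEven : Even M) :
    (∀ m : ℕ, m ≤ M / 2 - 1 →
        2 * Real.cos (π * m / M + (π / M) / 2)
          = 2 * Real.cos (π * (m + 1) / M - (π / M) / 2) ∧
        0 < 2 * Real.cos (π * m / M + (π / M) / 2)) ∧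
    (∀ n n' : ℕ, n < M → n' < M →
      ‖(Complex.exp (Complex.I * (2 * π * n / M : ℝ))
          + Complex.exp (Complex.I * (2 * π * n' / M + π / M : ℝ)))‖
        ∈ {r : ℝ | ∃ m : ℕ, m ≤ M / 2 - 1 ∧ r = 2 * Real.cos (π * m / M + (π / M) / 2)}) := by
  obtain ⟨K, hK⟩ := hEven
  have hK2 : M = 2 * K := by omega
  have hK1 : 1 ≤ K := by omega
  have hM2 : M / 2 = K := by omega
  have hMR : (0 : ℝ) < M := by exact_mod_cast hM
  have hMne : (M : ℝ) ≠ 0 := ne_of_gt hMR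
  have hpos : ∀ m : ℕ, m ≤ M / 2 - 1 → 0 < Real.cos (π * m / M + (π / M) / 2) := by
    intro m hm
    apply cos_pos_aux M K hK2 hK1
    · positivity
    · have : m ≤ K - 1 := by omega
      have : (m : ℝ) ≤ (K : ℝ) - 1 := by
        have h1 : (m:ℕ) + 1 ≤ K := by omega
        have : ((m:ℕ) : ℝ) + 1 ≤ (K:ℝ) := by exact_mod_cast h1
        linarith
      exact this
  constructor
  · intro m hm
    refine ⟨?_, by linarith [hpos m hm]⟩
    congr 1
    ring
  · intro n n' hn hn'
    set k : ℤ := (n' : ℤ) - n with hkdef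
    set j : ℤ := k % M with hjdef
    set q : ℤ := k / M with hqdef
    have hj0 : 0 ≤ j := Int.emod_nonneg k (by exact_mod_cast hM.ne')
    have hjM : j < M := by
      have := Int.emod_lt_of_pos k (b := (M:ℤ)) (by exact_mod_cast hM)
      exact this
    have hkeq : (k : ℝ) = M * q + j := by
      have hkk : k = (M:ℤ) * q + j := by
        rw [hqdef, hjdef]; exact (Int.mul_ediv_add_emod k M).symm
      exact_mod_cast congrArg (Int.cast : ℤ → ℝ) hkk
    rw [Set.mem_setOf_eq, abs_exp_add_exp]
    have hstep1 : (2 * π * n / M - (2 * π * n' / M + π / M)) / 2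
        = -(π * (k:ℝ) / M + (π / M) / 2) := by
      rw [hkdef]; push_cast; ring
    have hstep2 : π * (k:ℝ) / M + (π / M) / 2
        = (π * (j:ℝ) / M + (π / M) / 2) + q * π := by
      rw [hkeq]
      have h1 : π * ((M:ℝ) * q + j) = (π * j) + ((q:ℝ)*π) * M := by ring
      rw [h1, add_div, mul_div_cancel_right₀ _ hMne]
      ring
    have habs : |Real.cos ((2 * π * n / M - (2 * π * n' / M + π / M)) / 2)|
        = |Real.cos (π * (j:ℝ) / M + (π / M) / 2)| := by
      rw [hstep1, Real.cos_neg, hstep2, Real.cos_add_int_mul_pi, abs_mul]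
      have h1 : |((-1:ℝ))^q| = 1 := by
        rcases Int.even_or_odd q with h | h
        · rw [h.neg_one_zpow]; simp
        · rw [Odd.neg_one_zpow h]; simp
      rw [h1, one_mul]
    rw [habs]
    by_cases hcase : j ≤ (K : ℤ) - 1
    · refine ⟨j.toNat, by omega, ?_⟩
      have hjc : ((j.toNat : ℕ) : ℝ) = (j : ℝ) := by
        exact_mod_cast congrArg (Int.cast : ℤ → ℝ) (Int.toNat_of_nonneg hj0)
      have hp := hpos j.toNat (by omega)
      rw [hjc] at hp ⊢
      rw [abs_of_pos hp]
    · set m : ℕ := (M - 1 - j).toNat with hmdef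
      have hm : m ≤ M / 2 - 1 := by omega
      have hmc : ((m : ℕ) : ℝ) = (M : ℝ) - 1 - (j : ℝ) := by
        have h2 : (m : ℤ) = (M:ℤ) - 1 - j := by omega
        exact_mod_cast congrArg (Int.cast : ℤ → ℝ) h2
      have hneg : Real.cos (π * (m:ℝ) / M + (π / M) / 2)
          = -Real.cos (π * (j:ℝ) / M + (π / M) / 2) := by
        have harg : π * (m:ℝ) / M + (π / M) / 2
            = π - (π * (j:ℝ) / M + (π / M) / 2) := by
          rw [hmc]; field_simp; ring
        rw [harg, Real.cos_pi_sub]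
      refine ⟨m, hm, ?_⟩
      have hp := hpos m hm
      have : |Real.cos (π * (j:ℝ) / M + (π / M) / 2)|
          = Real.cos (π * (m:ℝ) / M + (π / M) / 2) := by
        rw [hneg] at hp
        rw [hneg, abs_of_neg (by linarith)]
      rw [this]
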